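/- Let p > 5, γ < 0, ω > 0, and let (α,β) and (α',β') both satisfy α > 0, 2α−β ≥ 0 and 2α+β ≥ 0. Then for every φ ∈ H¹(ℝ) with S_{ω,γ}(φ) < n_ω, one has K^{α,β}_{ω,γ}(φ) ≥ 0 if and only if K^{α',β'}_{ω,γ}(φ) ≥ 0. The same equivalence holds for every even φ ∈ H¹(ℝ) with S_{ω,γ}(φ) < r_ω. -/

import Mathlib

open MeasureTheory Real Filter Topology

/-- `φ : ℝ → ℂ` lies in `H¹(ℝ)`: `φ ∈ L²(ℝ)` together with a weak derivative
`dx ∈ L²(ℝ)` such that `φ x = φ 0 + ∫₀ˣ dx (t) dt` for all `x`. -/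
structure H1 where
  toFun : ℝ → ℂ
  dx : ℝ → ℂ
  memL2 : MemLp toFun 2 (volume : Measure ℝ)
  dx_memL2 : MemLp dx 2 (volume : Measure ℝ)
  eq_int : ∀ x : ℝ, toFun x = toFun 0 + ∫ t in (0:ℝ)..x, dx t

/-- `‖∂ₓφ‖²_{L²}` -/
noncomputable def gradSq (φ : H1) : ℝ := ∫ x : ℝ, ‖φ.dx x‖ ^ 2

/-- `‖φ‖²_{L²}` -/
noncomputable def massSq (φ : H1) : ℝ := ∫ x : ℝ, ‖φ.toFun x‖ ^ 2

/-- `‖φ‖^{p+1}_{L^{p+1}}` -/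
noncomputable def lpPow (p : ℝ) (φ : H1) : ℝ := ∫ x : ℝ, ‖φ.toFun x‖ ^ (p + 1)

/-- The action `S_{ω,μ}(φ) = (1/4)‖∂ₓφ‖²_{L²} − (μ/2)|φ(0)|² + (ω/2)‖φ‖²_{L²}
− (1/(p+1))‖φ‖^{p+1}_{L^{p+1}}`. -/
noncomputable def Sfun (p ω μ : ℝ) (φ : H1) : ℝ :=
  (1/4) * gradSq φ - (μ/2) * ‖φ.toFun 0‖ ^ 2 + (ω/2) * massSq φ - (1/(p+1)) * lpPow p φ

/-- The virial functional `P_μ(φ) = (1/2)‖∂ₓφ‖²_{L²} − (μ/2)|φ(0)|²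
− ((p−1)/(2(p+1)))‖φ‖^{p+1}_{L^{p+1}}`. -/
noncomputable def Pfun (p μ : ℝ) (φ : H1) : ℝ :=
  (1/2) * gradSq φ - (μ/2) * ‖φ.toFun 0‖ ^ 2 - ((p-1)/(2*(p+1))) * lpPow p φ

/-- The Nehari functional `I_{ω,γ}(φ) = (1/2)‖∂ₓφ‖²_{L²} − γ|φ(0)|² + ω‖φ‖²_{L²}
− ‖φ‖^{p+1}_{L^{p+1}}`. -/
noncomputable def Ifun (p ω γ : ℝ) (φ : H1) : ℝ :=
  (1/2) * gradSq φ - γ * ‖φ.toFun 0‖ ^ 2 + ω * massSq φ - lpPow p φ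

/-- `K^{α,β}_{ω,γ}`. -/
noncomputable def Kfun (p ω γ α β : ℝ) (φ : H1) : ℝ :=
  ((2*α-β)/4) * gradSq φ + (ω*(2*α+β)/2) * massSq φ - γ*α*‖φ.toFun 0‖ ^ 2
    - (((p+1)*α+β)/(p+1)) * lpPow p φ

/-- `J^{α,β}_{ω,γ}(φ) = S_{ω,γ}(φ) − K^{α,β}_{ω,γ}(φ)/μ̄` with `μ̄ = max(2α−β, 2α+β)`. -/
noncomputable def Jfun (p ω γ α β : ℝ) (φ : H1) : ℝ :=
  Sfun p ω γ φ - Kfun p ω γ α β φ / max (2*α-β) (2*α+β)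

/-- The mass `M(φ) = (1/2)‖φ‖²_{L²}`. -/
noncomputable def Mfun (φ : H1) : ℝ := (1/2) * massSq φ

/-- The energy `E_μ(φ) = (1/4)‖∂ₓφ‖²_{L²} − (μ/2)|φ(0)|² − (1/(p+1))‖φ‖^{p+1}_{L^{p+1}}`. -/
noncomputable def Efun (p μ : ℝ) (φ : H1) : ℝ :=
  (1/4) * gradSq φ - (μ/2) * ‖φ.toFun 0‖ ^ 2 - (1/(p+1)) * lpPow p φ

/-- `n_ω`: infimum of `S_{ω,γ}` over nonzero `H¹(ℝ)` functions with `P_γ = 0`. -/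
noncomputable def nOmega (p γ ω : ℝ) : ℝ :=
  sInf {s : ℝ | ∃ φ : H1, φ.toFun ≠ 0 ∧ Pfun p γ φ = 0 ∧ Sfun p ω γ φ = s}

/-- `r_ω`: infimum of `S_{ω,γ}` over nonzero even `H¹(ℝ)` functions with `P_γ = 0`. -/
noncomputable def rOmega (p γ ω : ℝ) : ℝ :=
  sInf {s : ℝ | ∃ φ : H1, φ.toFun ≠ 0 ∧ (∀ x, φ.toFun (-x) = φ.toFun x) ∧
    Pfun p γ φ = 0 ∧ Sfun p ω γ φ = s}

/-- `l_ω`: infimum of `S_{ω,0}` over nonzero `H¹(ℝ)` functions with `P_0 = 0`. -/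
noncomputable def lOmega (p ω : ℝ) : ℝ :=
  sInf {s : ℝ | ∃ φ : H1, φ.toFun ≠ 0 ∧ Pfun p 0 φ = 0 ∧ Sfun p ω 0 φ = s}

/-- The inverse hyperbolic tangent. -/
noncomputable def artanh (x : ℝ) : ℝ := (1/2) * Real.log ((1+x)/(1-x))

/-- The standing-wave profile
`Q_{ω,γ}(x) = ( ((p+1)ω/2)·sech²( ((p−1)√ω/√2)|x| + artanh(γ/√(2ω)) ) )^{1/(p−1)}`. -/
noncomputable def Qsol (p γ ω : ℝ) : ℝ → ℝ := fun x =>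
  (((p+1)*ω/2) *
    (1 / Real.cosh (((p-1)*Real.sqrt ω/Real.sqrt 2) * |x| + _root_.artanh (γ / Real.sqrt (2*ω)))) ^ 2)
  ^ (1/(p-1))

/-- The free ground state `Q_{1,0}(x) = ( ((p+1)/2)·sech²( ((p−1)/√2)x ) )^{1/(p−1)}`. -/
noncomputable def Qfree (p : ℝ) : ℝ → ℝ := fun x =>
  (((p+1)/2) * (1 / Real.cosh (((p-1)/Real.sqrt 2) * x)) ^ 2) ^ (1/(p-1))

/-- `‖φ‖²_𝓗 = (1/4)‖∂ₓφ‖²_{L²} + (ω/2)‖φ‖²_{L²} − (γ/2)|φ(0)|²`. -/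
noncomputable def HnormSq (ω γ : ℝ) (φ : H1) : ℝ :=
  (1/4) * gradSq φ + (ω/2) * massSq φ - (γ/2) * ‖φ.toFun 0‖ ^ 2


/-! ### Auxiliary lemmas -/

section Aux

lemma sq_norm_integrable {f : ℝ → ℂ} (hf : MemLp f 2 (volume : Measure ℝ)) :
    Integrable (fun x => ‖f x‖^2) (volume : Measure ℝ) := by
  have := hf.integrable_norm_rpow (by norm_num) (by norm_num)
  simpa [ENNReal.toReal_ofNat, Real.rpow_natCast] using this

lemma gradSq_nonneg (φ : H1) : 0 ≤ gradSq φ :=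
  integral_nonneg fun x => by positivity

lemma massSq_nonneg (φ : H1) : 0 ≤ massSq φ :=
  integral_nonneg fun x => by positivity

lemma H1.continuous (φ : H1) : Continuous φ.toFun := by
  have hloc : LocallyIntegrable φ.dx volume := φ.dx_memL2.locallyIntegrable (by norm_num)
  have hii : ∀ a b : ℝ, IntervalIntegrable φ.dx volume a b := fun a b =>
    (hloc.integrableOn_isCompact isCompact_uIcc).intervalIntegrable
  have h : Continuous fun x : ℝ => φ.toFun 0 + ∫ t in (0:ℝ)..x, φ.dx t :=
    continuous_const.add (intervalIntegral.continuous_primitive hii 0)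
  have : φ.toFun = fun x : ℝ => φ.toFun 0 + ∫ t in (0:ℝ)..x, φ.dx t := funext φ.eq_int
  rw [this]; exact h

lemma massSq_pos (φ : H1) (hne : φ.toFun ≠ 0) : 0 < massSq φ := by
  rcases (massSq_nonneg φ).lt_or_eq with h | h
  · exact h
  exfalso
  have hint := sq_norm_integrable φ.memL2
  have h0 : ∫ x : ℝ, ‖φ.toFun x‖^2 = 0 := h.symm
  have hae : (fun x => ‖φ.toFun x‖^2) =ᵐ[volume] 0 :=
    (integral_eq_zero_iff_of_nonneg (fun x => by positivity) hint).mp h0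
  have hae2 : φ.toFun =ᵐ[volume] (0 : ℝ → ℂ) := by
    filter_upwards [hae] with x hx
    have : ‖φ.toFun x‖^2 = 0 := hx
    simpa [pow_eq_zero_iff] using this
  have := (Continuous.ae_eq_iff_eq volume φ.continuous continuous_const).mp hae2
  exact hne this

lemma gradSq_pos (φ : H1) (hne : φ.toFun ≠ 0) : 0 < gradSq φ := by
  rcases (gradSq_nonneg φ).lt_or_eq with h | h
  · exact h
  exfalso
  have hint := sq_norm_integrable φ.dx_memL2
  have hae : (fun x => ‖φ.dx x‖^2) =ᵐ[volume] 0 :=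
    (integral_eq_zero_iff_of_nonneg (fun x => by positivity) hint).mp h.symm
  have hae2 : φ.dx =ᵐ[volume] (0 : ℝ → ℂ) := by
    filter_upwards [hae] with x hx
    have : ‖φ.dx x‖^2 = 0 := hx
    simpa [pow_eq_zero_iff] using this
  have hconst : ∀ x : ℝ, φ.toFun x = φ.toFun 0 := by
    intro x
    rw [φ.eq_int x]
    have : ∫ t in (0:ℝ)..x, φ.dx t = 0 := by
      rw [intervalIntegral.integral_congr_ae]
      · exact intervalIntegral.integral_zero
      · filter_upwards [hae2] with t ht _; exact ht
    rw [this, add_zero]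
  have hmem : MemLp (fun _ : ℝ => φ.toFun 0) 2 (volume : Measure ℝ) := by
    have h2 := φ.memL2
    have h3 : φ.toFun = fun _ => φ.toFun 0 := funext hconst
    rwa [h3] at h2
  rw [memLp_const_iff (by norm_num) (by norm_num)] at hmem
  rcases hmem with h0 | hfin
  · apply hne; funext x; rw [hconst x, h0]; rfl
  · simp at hfin

lemma memL2_comp_div {f : ℝ → ℂ} (hf : MemLp f 2 (volume : Measure ℝ)) {σ : ℝ} (hσ : 0 < σ) :
    MemLp (fun x => f (x/σ)) 2 (volume : Measure ℝ) := by
  have hσi : σ⁻¹ ≠ 0 := inv_ne_zero hσ.ne'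
  have hmap : Measure.map (· * σ⁻¹) (volume : Measure ℝ)
      = ENNReal.ofReal |σ⁻¹⁻¹| • volume := Real.map_volume_mul_right hσi
  have h1 : MemLp f 2 (ENNReal.ofReal |σ⁻¹⁻¹| • volume) :=
    hf.smul_measure ENNReal.ofReal_ne_top
  rw [← hmap] at h1
  have h2 := ((Homeomorph.mulRight₀ σ⁻¹ hσi).toMeasurableEquiv).memLp_map_measure_iff.mp h1
  simp only [div_eq_mul_inv]; exact h2

noncomputable def H1.dilate (φ : H1) {σ : ℝ} (hσ : 0 < σ) : H1 where
  toFun := fun x => φ.toFun (x/σ)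
  dx := fun x => (σ:ℂ)⁻¹ * φ.dx (x/σ)
  memL2 := memL2_comp_div φ.memL2 hσ
  dx_memL2 := (memL2_comp_div φ.dx_memL2 hσ).const_mul _
  eq_int := by
    intro x
    have hc : (σ:ℂ) ≠ 0 := by exact_mod_cast hσ.ne'
    show φ.toFun (x/σ) = φ.toFun (0/σ) + ∫ t in (0:ℝ)..x, (σ:ℂ)⁻¹ * φ.dx (t/σ)
    rw [intervalIntegral.integral_const_mul, intervalIntegral.integral_comp_div φ.dx hσ.ne']
    rw [zero_div]
    have : (σ:ℝ) • (∫ t in (0:ℝ)..(x/σ), φ.dx t) = (σ:ℂ) * ∫ t in (0:ℝ)..(x/σ), φ.dx t := by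
      simp [Complex.real_smul]
    rw [this, ← mul_assoc, inv_mul_cancel₀ hc, one_mul, ← φ.eq_int (x/σ)]

lemma dilate_toFun (φ : H1) {σ : ℝ} (hσ : 0 < σ) (x : ℝ) :
    (φ.dilate hσ).toFun x = φ.toFun (x/σ) := rfl

lemma gradSq_dilate (φ : H1) {σ : ℝ} (hσ : 0 < σ) :
    gradSq (φ.dilate hσ) = σ⁻¹ * gradSq φ := by
  have h1 : gradSq (φ.dilate hσ) = ∫ x : ℝ, (σ⁻¹)^2 * ‖φ.dx (x/σ)‖^2 := by
    unfold gradSq H1.dilate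
    congr 1; funext x
    rw [norm_mul]
    simp [abs_of_pos hσ, mul_pow]
  rw [h1, MeasureTheory.integral_const_mul,
    MeasureTheory.Measure.integral_comp_div (fun x => ‖φ.dx x‖^2) σ]
  rw [abs_of_pos hσ, smul_eq_mul]
  unfold gradSq
  field_simp

lemma massSq_dilate (φ : H1) {σ : ℝ} (hσ : 0 < σ) :
    massSq (φ.dilate hσ) = σ * massSq φ := by
  unfold massSq H1.dilate
  rw [MeasureTheory.Measure.integral_comp_div (fun x => ‖φ.toFun x‖^2) σ, abs_of_pos hσ,
    smul_eq_mul]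

lemma lpPow_dilate (p : ℝ) (φ : H1) {σ : ℝ} (hσ : 0 < σ) :
    lpPow p (φ.dilate hσ) = σ * lpPow p φ := by
  unfold lpPow H1.dilate
  rw [MeasureTheory.Measure.integral_comp_div (fun x => ‖φ.toFun x‖^(p+1)) σ, abs_of_pos hσ,
    smul_eq_mul]

lemma key_ineq (p ω γ s t g m q L σ : ℝ) (hp : 5 < p) (hs : 0 ≤ s) (ht : 0 ≤ t)
    (hst : 0 < s + t) (hγ : γ < 0) (hq : 0 ≤ q) (hg : 0 < g) (hL : 0 < L) (hσ : 0 < σ)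
    (hE2 : g*(p+1) = γ*q*σ*(p+1) + (p-1)*σ^2*L)
    (hE1 : s*g*(p+1) + 2*ω*t*m*(p+1) = γ*(s+t)*q*(p+1) + ((p-1)*s+(p+3)*t)*L) :
    g/(4*σ) - γ/2*q + ω/2*(σ*m) - σ*L/(p+1) ≤ g/4 - γ/2*q + ω/2*m - L/(p+1) := by
  have hp1 : (0:ℝ) < p + 1 := by linarith
  have hσ' : σ ≠ 0 := hσ.ne'
  have hp1' : p + 1 ≠ 0 := hp1.ne'
  set Δ : ℝ := (g/4 - γ/2*q + ω/2*m - L/(p+1)) - (g/(4*σ) - γ/2*q + ω/2*(σ*m) - σ*L/(p+1)) with hΔ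
  have hW : Δ * (4*σ*(p+1)) = (1-σ)*(-(g*(p+1)) + 2*ω*m*σ*(p+1) - 4*σ*L) := by
    rw [hΔ]; field_simp; ring
  have hfinal : 0 ≤ Δ * (4*σ*(p+1)) := by
    rcases ht.lt_or_eq with htpos | ht0
    · have hid : t * (Δ * (4*σ*(p+1)))
          = (1-σ)^2 * (s*g*(p+1) + (p-1)*(s+t)*σ*L) := by
        rw [hW]
        linear_combination ((1-σ)*σ) * hE1 - ((1-σ)*(s+t)) * hE2
      have hrhs : 0 ≤ (1-σ)^2 * (s*g*(p+1) + (p-1)*(s+t)*σ*L) := by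
        apply mul_nonneg (sq_nonneg _)
        have h1 : 0 ≤ s*g*(p+1) := by positivity
        have h2 : 0 ≤ (p-1)*(s+t)*σ*L := by
          apply mul_nonneg (mul_nonneg (mul_nonneg (by linarith) hst.le) hσ.le) hL.le
        linarith
      nlinarith [hid, hrhs, htpos]
    · have ht0' : t = 0 := ht0.symm
      subst ht0'
      have hs' : 0 < s := by linarith
      have hgq : g*(p+1) = γ*q*(p+1) + (p-1)*L := by
        have h := hE1
        have : s * (g*(p+1) - (γ*q*(p+1) + (p-1)*L)) = 0 := by linear_combination h
        rcases mul_eq_zero.mp this with h1 | h2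
        · exact absurd h1 hs'.ne'
        · linarith
      have hfac : (σ - 1) * (g*(p+1) + (p-1)*σ*L) = 0 := by
        linear_combination σ * hgq - hE2
      have hpos2 : 0 < g*(p+1) + (p-1)*σ*L := by
        have : 0 < (p-1)*σ*L := by
          apply mul_pos (mul_pos (by linarith) hσ) hL
        nlinarith
      have hσ1 : σ = 1 := by
        rcases mul_eq_zero.mp hfac with h1 | h2
        · linarith
        · exact absurd h2 hpos2.ne'
      rw [hW, hσ1]; norm_num
  have h4 : 0 < 4*σ*(p+1) := by positivity
  have h5 := nonneg_of_mul_nonneg_left hfinal h4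
  rw [hΔ] at h5
  linarith

lemma S_nonneg_of_P_zero (p γ ω : ℝ) (hp : 5 < p) (hγ : γ < 0) (hω : 0 < ω) (χ : H1)
    (hP : Pfun p γ χ = 0) : 0 ≤ Sfun p ω γ χ := by
  have hg := gradSq_nonneg χ
  have hm := massSq_nonneg χ
  have hq : (0:ℝ) ≤ ‖χ.toFun 0‖^2 := by positivity
  have hp1 : (0:ℝ) < p+1 := by linarith
  have hpm : (0:ℝ) < p-1 := by linarith
  unfold Pfun at hP
  unfold Sfun
  set G : ℝ := gradSq χ
  set M : ℝ := massSq χ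
  set Q : ℝ := ‖χ.toFun 0‖^2
  set LL : ℝ := lpPow p χ
  have hP2 : (p-1) * LL = (p+1) * G - (p+1) * (γ * Q) := by
    field_simp at hP
    linarith
  have h4 : (0:ℝ) < 4*(p-1)*(p+1) := by positivity
  have hkey : 0 ≤ (1/4 * G - γ/2 * Q + ω/2 * M
      - 1/(p+1) * LL) * (4*(p-1)*(p+1)) := by
    have hexp : (1/4 * G - γ/2 * Q + ω/2 * M
        - 1/(p+1) * LL) * (4*(p-1)*(p+1))
        = (p-1)*(p+1)*G - 2*γ*(p-1)*(p+1)*Q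
          + 2*ω*(p-1)*(p+1)*M - 4*(p-1)*LL := by
      field_simp
      ring
    rw [hexp]
    nlinarith [hP2, mul_nonneg hm hω.le, mul_nonneg hq (neg_nonneg.mpr hγ.le),
      mul_nonneg hg (by linarith : (0:ℝ) ≤ p - 5),
      mul_nonneg (mul_nonneg hq (neg_nonneg.mpr hγ.le)) (by linarith : (0:ℝ) ≤ p - 3),
      mul_nonneg (mul_nonneg hm hω.le) (by nlinarith : (0:ℝ) ≤ (p-1)*(p+1))]
  exact nonneg_of_mul_nonneg_left hkey h4

set_option maxHeartbeats 1000000 in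
lemma K_aux (p γ ω a b a' b' : ℝ) (hp : 5 < p) (hγ : γ < 0) (hω : 0 < ω)
    (ha : 0 < a) (hb1 : 0 ≤ 2*a - b) (hb2 : 0 ≤ 2*a + b)
    (ha' : 0 < a') (hb1' : 0 ≤ 2*a' - b') (hb2' : 0 ≤ 2*a' + b')
    (n : ℝ) (φ : H1)
    (hbound : ∀ σ : ℝ, ∀ hσ : 0 < σ, (φ.dilate hσ).toFun ≠ 0 →
      Pfun p γ (φ.dilate hσ) = 0 → n ≤ Sfun p ω γ (φ.dilate hσ))
    (hS : Sfun p ω γ φ < n) (hK : 0 ≤ Kfun p ω γ a b φ) : 0 ≤ Kfun p ω γ a' b' φ := by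
  have hp1 : (0:ℝ) < p+1 := by linarith
  have hpm : (0:ℝ) < p-1 := by linarith
  by_contra hKneg
  push_neg at hKneg
  have hφne : φ.toFun ≠ 0 := by
    intro h0
    have hm0 : massSq φ = 0 := by unfold massSq; rw [h0]; simp
    have hL0 : lpPow p φ = 0 := by
      unfold lpPow; rw [h0]
      simp [Real.zero_rpow hp1.ne']
    have hq0 : ‖φ.toFun 0‖^2 = 0 := by rw [h0]; simp
    have hKval : Kfun p ω γ a' b' φ = ((2*a'-b')/4) * gradSq φ := by
      unfold Kfun; rw [hm0, hL0, hq0]; ring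
    nlinarith [gradSq_nonneg φ, mul_nonneg (by linarith : (0:ℝ) ≤ (2*a'-b')/4) (gradSq_nonneg φ)]
  have hKK' : 0 < Kfun p ω γ a b φ - Kfun p ω γ a' b' φ := by linarith
  set θ : ℝ := Kfun p ω γ a b φ / (Kfun p ω γ a b φ - Kfun p ω γ a' b' φ) with hθ
  have hθ0 : 0 ≤ θ := div_nonneg hK hKK'.le
  have hθ1 : θ ≤ 1 := by rw [hθ, div_le_one hKK']; linarith
  set A : ℝ := (1-θ)*a + θ*a' with hAdef
  set B : ℝ := (1-θ)*b + θ*b' with hBdef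
  have hA : 0 < A := by
    rw [hAdef]
    rcases le_total a a' with hc | hc
    · nlinarith [mul_nonneg hθ0 (sub_nonneg.mpr hc)]
    · nlinarith [mul_nonneg (sub_nonneg.mpr hθ1) (sub_nonneg.mpr hc)]
  have hsA : 0 ≤ 2*A - B := by
    have h1 : 2*A - B = (1-θ)*(2*a-b) + θ*(2*a'-b') := by rw [hAdef, hBdef]; ring
    rw [h1]
    have := mul_nonneg (by linarith : (0:ℝ) ≤ 1-θ) hb1
    have := mul_nonneg hθ0 hb1'
    linarith
  have htA : 0 ≤ 2*A + B := by
    have h1 : 2*A + B = (1-θ)*(2*a+b) + θ*(2*a'+b') := by rw [hAdef, hBdef]; ring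
    rw [h1]
    have := mul_nonneg (by linarith : (0:ℝ) ≤ 1-θ) hb2
    have := mul_nonneg hθ0 hb2'
    linarith
  have hlin : Kfun p ω γ A B φ
      = (1-θ)*Kfun p ω γ a b φ + θ*Kfun p ω γ a' b' φ := by
    rw [hAdef, hBdef]; unfold Kfun; ring
  have hK0 : Kfun p ω γ A B φ = 0 := by
    rw [hlin, hθ]
    field_simp
    ring
  clear hlin
  clear_value θ
  clear hθ
  clear_value A B
  have hg := gradSq_pos φ hφne
  have hm := massSq_pos φ hφne
  have hq : (0:ℝ) ≤ ‖φ.toFun 0‖^2 := by positivity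
  have hcB : 0 < (p+1)*A + B := by nlinarith
  have hL : 0 < lpPow p φ := by
    by_contra hLle
    push_neg at hLle
    unfold Kfun at hK0
    have hquad : 0 < ((2*A-B)/4)*gradSq φ + (ω*(2*A+B)/2)*massSq φ - γ*A*‖φ.toFun 0‖^2 := by
      have hq' : 0 ≤ -γ*A*‖φ.toFun 0‖^2 := by
        apply mul_nonneg (mul_nonneg (by linarith) hA.le) hq
      rcases hsA.lt_or_eq with hs' | hs'
      · have h1 : 0 < (2*A-B)/4 * gradSq φ := mul_pos (by linarith) hg
        have h2 : 0 ≤ ω*(2*A+B)/2 * massSq φ :=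
          mul_nonneg (by positivity) hm.le
        linarith
      · have ht' : 0 < 2*A + B := by linarith
        have h1 : 0 < ω*(2*A+B)/2 * massSq φ := mul_pos (by positivity) hm
        have h2 : 0 ≤ (2*A-B)/4 * gradSq φ := mul_nonneg (by linarith) hg.le
        linarith
    have hterm : ((p+1)*A+B)/(p+1) * lpPow p φ ≤ 0 :=
      mul_nonpos_of_nonneg_of_nonpos (div_nonneg hcB.le hp1.le) hLle
    nlinarith
  set g : ℝ := gradSq φ with hgdef
  set m : ℝ := massSq φ with hmdef
  set q : ℝ := ‖φ.toFun 0‖^2 with hqdef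
  set L : ℝ := lpPow p φ with hLdef
  set s : ℝ := 2*A - B with hsdef
  set t : ℝ := 2*A + B with htdef
  have hst : 0 < s + t := by rw [hsdef, htdef]; nlinarith
  have hE1 : s*g*(p+1) + 2*ω*t*m*(p+1) = γ*(s+t)*q*(p+1) + ((p-1)*s+(p+3)*t)*L := by
    unfold Kfun at hK0
    have hc : ((p+1)*A+B)/(p+1)*(p+1) = (p+1)*A+B := div_mul_cancel₀ _ hp1.ne'
    rw [hsdef, htdef]
    linear_combination (4*(p+1))*hK0 + (4*L)*hc
  set D : ℝ := (γ*q*(p+1))^2 + 4*((p-1)*L)*(g*(p+1)) with hDdef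
  have hDpos : 0 < D := by
    rw [hDdef]
    have : 0 < 4*((p-1)*L)*(g*(p+1)) := by positivity
    nlinarith [sq_nonneg (γ*q*(p+1))]
  set Sq : ℝ := Real.sqrt D with hSqdef
  have hSqpos : 0 < Sq := Real.sqrt_pos.mpr hDpos
  have hsq : Sq^2 = D := Real.sq_sqrt hDpos.le
  set σ : ℝ := (-(γ*q*(p+1)) + Sq) / (2*((p-1)*L)) with hσdef
  have hγq : 0 ≤ -(γ*q*(p+1)) := by
    have : γ*q ≤ 0 := mul_nonpos_of_nonpos_of_nonneg hγ.le hq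
    nlinarith
  have hden : 0 < 2*((p-1)*L) := by positivity
  have hσ : 0 < σ := by
    rw [hσdef]
    apply div_pos (by linarith) hden
  have hquadσ : (p-1)*L*σ^2 + γ*q*(p+1)*σ - g*(p+1) = 0 := by
    rw [hσdef]
    field_simp
    nlinarith [hsq]
  have hE2 : g*(p+1) = γ*q*σ*(p+1) + (p-1)*σ^2*L := by linear_combination -hquadσ
  have hχg : gradSq (φ.dilate hσ) = σ⁻¹ * g := gradSq_dilate φ hσ
  have hχm : massSq (φ.dilate hσ) = σ * m := massSq_dilate φ hσ
  have hχL : lpPow p (φ.dilate hσ) = σ * L := lpPow_dilate p φ hσ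
  have hχ0 : ‖(φ.dilate hσ).toFun 0‖^2 = q := by
    rw [dilate_toFun φ hσ 0, zero_div, hqdef]
  have hPχ : Pfun p γ (φ.dilate hσ) = 0 := by
    unfold Pfun
    rw [hχg, hχ0, hχL]
    have hexp : 1/2 * (σ⁻¹*g) - γ/2*q - (p-1)/(2*(p+1))*(σ*L)
        = ((g*(p+1)) - (γ*q*σ*(p+1) + (p-1)*σ^2*L)) / (2*σ*(p+1)) := by
      field_simp
      ring
    rw [hexp, ← hE2]
    simp
  have hχne : (φ.dilate hσ).toFun ≠ 0 := by
    intro h0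
    apply hφne
    funext y
    have h1 := congrFun h0 (σ*y)
    rw [dilate_toFun φ hσ (σ*y), mul_div_cancel_left₀ y hσ.ne'] at h1
    exact h1
  have hSχ : Sfun p ω γ (φ.dilate hσ) ≤ Sfun p ω γ φ := by
    unfold Sfun
    rw [hχg, hχm, hχL, hχ0]
    have hki := key_ineq p ω γ s t g m q L σ hp hsA htA hst hγ hq hg hL hσ hE2 hE1
    have e1 : 1/4 * (σ⁻¹*g) = g/(4*σ) := by
      field_simp
    have e2 : 1/(p+1) * (σ*L) = σ*L/(p+1) := by ring
    have e3 : ω/2 * (σ*m) = ω/2*(σ*m) := rfl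
    have e4 : (1:ℝ)/(p+1) * L = L/(p+1) := by ring
    rw [hgdef, hmdef, hqdef, hLdef] at hki ⊢
    linarith [hki, e1.le, e1.ge]
  have hb := hbound σ hσ hχne hPχ
  linarith

end Aux


/-- below `n_ω` (resp. below `r_ω` for even functions), the sign of
`K^{α,β}_{ω,γ}` does not depend on the admissible pair `(α,β)`. -/

theorem K_sign_independent (p γ ω α β α' β' : ℝ) (hp : 5 < p) (hγ : γ < 0) (hω : 0 < ω)
    (hα : 0 < α) (hβ1 : 0 ≤ 2*α - β) (hβ2 : 0 ≤ 2*α + β)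
    (hα' : 0 < α') (hβ1' : 0 ≤ 2*α' - β') (hβ2' : 0 ≤ 2*α' + β') :
    (∀ φ : H1, Sfun p ω γ φ < nOmega p γ ω →
      (0 ≤ Kfun p ω γ α β φ ↔ 0 ≤ Kfun p ω γ α' β' φ)) ∧
    (∀ φ : H1, (∀ x, φ.toFun (-x) = φ.toFun x) → Sfun p ω γ φ < rOmega p γ ω →
      (0 ≤ Kfun p ω γ α β φ ↔ 0 ≤ Kfun p ω γ α' β' φ)) := by
  have hadm : ∀ φ : H1, ∀ n : ℝ,
      (∀ σ : ℝ, ∀ hσ : 0 < σ, (φ.dilate hσ).toFun ≠ 0 →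
        Pfun p γ (φ.dilate hσ) = 0 → n ≤ Sfun p ω γ (φ.dilate hσ)) →
      Sfun p ω γ φ < n →
      (0 ≤ Kfun p ω γ α β φ ↔ 0 ≤ Kfun p ω γ α' β' φ) := by
    intro φ n hbound hS
    constructor
    · exact fun h => K_aux p γ ω α β α' β' hp hγ hω hα hβ1 hβ2 hα' hβ1' hβ2' n φ hbound hS h
    · exact fun h => K_aux p γ ω α' β' α β hp hγ hω hα' hβ1' hβ2' hα hβ1 hβ2 n φ hbound hS h
  constructor
  · intro φ hS
    apply hadm φ (nOmega p γ ω) _ hS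
    intro σ hσ hne hP
    apply csInf_le
    · refine ⟨0, ?_⟩
      rintro x ⟨χ, hχne, hχP, rfl⟩
      exact S_nonneg_of_P_zero p γ ω hp hγ hω χ hχP
    · exact ⟨φ.dilate hσ, hne, hP, rfl⟩
  · intro φ heven hS
    apply hadm φ (rOmega p γ ω) _ hS
    intro σ hσ hne hP
    apply csInf_le
    · refine ⟨0, ?_⟩
      rintro x ⟨χ, hχne, _, hχP, rfl⟩
      exact S_nonneg_of_P_zero p γ ω hp hγ hω χ hχP
    · refine ⟨φ.dilate hσ, hne, ?_, hP, rfl⟩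
      intro x
      rw [dilate_toFun φ hσ (-x), dilate_toFun φ hσ x, neg_div, heven]
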